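/- Characterization of the tail space: A measurable function u : ℝⁿ → ℝ belongs to L^g_s(ℝⁿ) if and only if Tail(u; x₀, R) < ∞ for every x₀ ∈ ℝⁿ and every R > 0. -/

import Mathlib

open MeasureTheory Metric Set Filter

noncomputable section

abbrev Rn (n : ℕ) := EuclideanSpace ℝ (Fin n)

/-- The set `C_Ω = (Ω × ℝⁿ) ∪ (ℝⁿ × Ω)`. -/
def CSet {n : ℕ} (Ω : Set (Rn n)) : Set (Rn n × Rn n) :=
  (Ω ×ˢ (Set.univ : Set (Rn n))) ∪ ((Set.univ : Set (Rn n)) ×ˢ Ω)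

/-- Membership in the fractional Orlicz–Sobolev space `𝕎^{s,G}(Ω)`:
`u` is measurable, `∫_Ω G(|u|) < ∞`, and the Gagliardo-type energy over `C_Ω` is finite. -/
def MemWsG {n : ℕ} (G : ℝ → ℝ) (s : ℝ) (Ω : Set (Rn n)) (u : Rn n → ℝ) : Prop :=
  Measurable u ∧ IntegrableOn (fun x => G |u x|) Ω ∧
    IntegrableOn
      (fun z : Rn n × Rn n =>
        G (|u z.1 - u z.2| / ‖z.1 - z.2‖ ^ s) * ‖z.1 - z.2‖ ^ (-(n : ℝ)))
      (CSet Ω)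

/-- Membership in the tail space `L^g_s(ℝⁿ)`. -/
def MemLgs {n : ℕ} (g : ℝ → ℝ) (s : ℝ) (u : Rn n → ℝ) : Prop :=
  Measurable u ∧
    Integrable (fun x : Rn n =>
      g (|u x| / (1 + ‖x‖) ^ s) * (1 + ‖x‖) ^ (-(n : ℝ) - s))

/-- The nonlocal tail `Tail(u; x₀, R)`. -/
def fracTail {n : ℕ} (g : ℝ → ℝ) (s : ℝ) (u : Rn n → ℝ) (x₀ : Rn n) (R : ℝ) : ℝ :=
  ∫ x in (ball x₀ R)ᶜ, g (|u x| / ‖x - x₀‖ ^ s) * ‖x - x₀‖ ^ (-(n : ℝ) - s)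

/-- The weak formulation pairing
`∬_{C_Ω} g(|u(x)-u(y)|/|x-y|^s) sgn(u(x)-u(y)) (η(x)-η(y)) K(x,y) dx dy`. -/
def weakForm {n : ℕ} (g : ℝ → ℝ) (s : ℝ) (K : Rn n → Rn n → ℝ) (Ω : Set (Rn n))
    (u η : Rn n → ℝ) : ℝ :=
  ∫ z in CSet Ω,
    g (|u z.1 - u z.2| / ‖z.1 - z.2‖ ^ s) * Real.sign (u z.1 - u z.2) *
      (η z.1 - η z.2) * K z.1 z.2

/-- `u` is a weak solution of `ℒu = 0` in `Ω`. -/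
def IsWeakSol {n : ℕ} (g G : ℝ → ℝ) (s : ℝ) (K : Rn n → Rn n → ℝ) (Ω : Set (Rn n))
    (u : Rn n → ℝ) : Prop :=
  ∀ η : Rn n → ℝ, MemWsG G s Ω η → (∀ x ∉ Ω, η x = 0) →
    weakForm g s K Ω u η = 0

/-- `u` is a weak subsolution of `ℒu = 0` in `Ω`. -/
def IsWeakSubSol {n : ℕ} (g G : ℝ → ℝ) (s : ℝ) (K : Rn n → Rn n → ℝ) (Ω : Set (Rn n))
    (u : Rn n → ℝ) : Prop :=
  ∀ η : Rn n → ℝ, MemWsG G s Ω η → (∀ x, 0 ≤ η x) → (∀ x ∉ Ω, η x = 0) →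
    weakForm g s K Ω u η ≤ 0

/-- `u` is a weak supersolution of `ℒu = 0` in `Ω`. -/
def IsWeakSuperSol {n : ℕ} (g G : ℝ → ℝ) (s : ℝ) (K : Rn n → Rn n → ℝ) (Ω : Set (Rn n))
    (u : Rn n → ℝ) : Prop :=
  ∀ η : Rn n → ℝ, MemWsG G s Ω η → (∀ x, 0 ≤ η x) → (∀ x ∉ Ω, η x = 0) →
    0 ≤ weakForm g s K Ω u η

/-- Structural conditions on `g` and `G`: `g` is strictly increasing and continuous on `[0,∞)`
with `g(0)=0`, `g(t) → ∞`, `G(t) = ∫₀ᵗ g`, and `p ≤ t g(t)/G(t) ≤ q` for `t > 0`. -/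
def GoodG (p q : ℝ) (g G : ℝ → ℝ) : Prop :=
  StrictMonoOn g (Set.Ici (0 : ℝ)) ∧ ContinuousOn g (Set.Ici (0 : ℝ)) ∧ g 0 = 0 ∧
    (∀ t : ℝ, 0 ≤ t → 0 ≤ g t) ∧ Tendsto g atTop atTop ∧
    (∀ t : ℝ, G t = ∫ τ in (0:ℝ)..t, g τ) ∧
    (∀ t : ℝ, 0 < t → p ≤ t * g t / G t ∧ t * g t / G t ≤ q)

/-- Structural conditions on the kernel `K`: measurable, symmetric and comparable to
`|x-y|^{-n}` with constants `lam ≤ Lam`. -/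
def GoodK (n : ℕ) (lam Lam : ℝ) (K : Rn n → Rn n → ℝ) : Prop :=
  Measurable (Function.uncurry K) ∧ (∀ x y, K x y = K y x) ∧
    ∀ x y : Rn n, x ≠ y →
      lam * ‖x - y‖ ^ (-(n : ℝ)) ≤ K x y ∧ K x y ≤ Lam * ‖x - y‖ ^ (-(n : ℝ))

/-- `Ω` is a bounded domain. -/
def GoodDomain {n : ℕ} (Ω : Set (Rn n)) : Prop :=
  IsOpen Ω ∧ IsConnected Ω ∧ Bornology.IsBounded Ω

/-- `Finv` is the inverse of `F` viewed as a bijection of `[0,∞)`: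
for every `t ≥ 0`, `Finv t ≥ 0` and `F (Finv t) = t`. -/
def IsRightInvOn (F Finv : ℝ → ℝ) : Prop :=
  ∀ t : ℝ, 0 ≤ t → 0 ≤ Finv t ∧ F (Finv t) = t

/-- The nonlocal energy functional `I[v] = ∬_{C_Ω} G(|v(x)-v(y)|/|x-y|^s) K(x,y) dx dy`. -/
def fracEnergy {n : ℕ} (G : ℝ → ℝ) (s : ℝ) (K : Rn n → Rn n → ℝ) (Ω : Set (Rn n))
    (v : Rn n → ℝ) : ℝ :=
  ∫ z in CSet Ω, G (|v z.1 - v z.2| / ‖z.1 - z.2‖ ^ s) * K z.1 z.2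

lemma doubling (p q : ℝ) (hp : 1 < p) (hpq : p ≤ q) (g G : ℝ → ℝ)
    (hgG : GoodG p q g G) {lam t : ℝ} (hlam : 1 ≤ lam) (ht : 0 ≤ t) :
    g (lam * t) ≤ q / p * lam ^ q * g t := by
  obtain ⟨hmono, hcont, hg0, hgnn, -, hGdef, hpqG⟩ := hgG
  have hp0 : (0:ℝ) < p := lt_trans one_pos hp
  have hq0 : (0:ℝ) < q := lt_of_lt_of_le hp0 hpq
  have hlam0 : (0:ℝ) < lam := lt_of_lt_of_le one_pos hlam
  have hgpos : ∀ x : ℝ, 0 < x → 0 < g x := fun x hx => hg0 ▸ hmono (Set.mem_Ici.mpr le_rfl) (Set.mem_Ici.mpr hx.le) hx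
  have hGpos : ∀ x : ℝ, 0 < x → 0 < G x := by
    intro x hx
    by_contra hcon
    push_neg at hcon
    have h1 := (hpqG x hx).1
    rcases lt_or_eq_of_le hcon with h | h
    · have : x * g x / G x < 0 := div_neg_of_pos_of_neg (mul_pos hx (hgpos x hx)) h
      linarith
    · rw [h, div_zero] at h1; linarith
  have hupper : ∀ x : ℝ, 0 < x → x * g x ≤ q * G x := by
    intro x hx
    have h := (hpqG x hx).2
    rw [div_le_iff₀ (hGpos x hx)] at h
    linarith [h]
  have hlower : ∀ x : ℝ, 0 < x → p * G x ≤ x * g x := by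
    intro x hx
    have h := (hpqG x hx).1
    rw [le_div_iff₀ (hGpos x hx)] at h
    linarith [h]
  rcases eq_or_lt_of_le ht with h | ht0
  · rw [← h, mul_zero, hg0, mul_zero]
  -- derivative of G
  have hderiv : ∀ x : ℝ, 0 < x → HasDerivAt G (g x) x := by
    intro x hx
    have hint : IntervalIntegrable g volume 0 x := by
      apply ContinuousOn.intervalIntegrable
      apply hcont.mono
      rw [Set.uIcc_of_le hx.le]
      exact Set.Icc_subset_Ici_self
    have hmeasg : StronglyMeasurableAtFilter g (nhds x) :=
      ⟨Set.Ici 0, Ici_mem_nhds hx, hcont.aestronglyMeasurable measurableSet_Ici⟩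
    have hca : ContinuousAt g x := hcont.continuousAt (Ici_mem_nhds hx)
    have hGe : G = fun v => ∫ τ in (0:ℝ)..v, g τ := funext hGdef
    rw [hGe]
    exact intervalIntegral.integral_hasDerivAt_right hint hmeasg hca
  -- antitone of G x * x^(-q)
  have hdall : ∀ x ∈ Set.Ioi (0:ℝ), HasDerivAt (fun y => G y * y ^ (-q))
      (g x * x ^ (-q) + G x * (-q * x ^ (-q - 1))) x := by
    intro x hx
    exact (hderiv x hx).mul (Real.hasDerivAt_rpow_const (Or.inl (ne_of_gt hx)))
  have hanti : AntitoneOn (fun x => G x * x ^ (-q)) (Set.Ioi 0) := by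
    apply antitoneOn_of_deriv_nonpos (convex_Ioi 0)
    · exact fun x hx => ((hdall x hx).continuousAt).continuousWithinAt
    · rw [interior_Ioi]
      exact fun x hx => (hdall x hx).differentiableAt.differentiableWithinAt
    · rw [interior_Ioi]
      intro x hx
      rw [(hdall x hx).deriv]
      have hx0 : (0:ℝ) < x := hx
      have hxq : x ^ (-q) = x * x ^ (-q - 1) := by
        have h := Real.rpow_add hx0 1 (-q - 1)
        rw [Real.rpow_one, show (1:ℝ) + (-q - 1) = -q by ring] at h
        exact h
      have h1 : x * g x - q * G x ≤ 0 := by linarith [hupper x hx0]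
      have h2 : (0:ℝ) ≤ x ^ (-q - 1) := Real.rpow_nonneg hx0.le _
      calc g x * x ^ (-q) + G x * (-q * x ^ (-q - 1))
          = (x * g x - q * G x) * x ^ (-q - 1) := by rw [hxq]; ring
        _ ≤ 0 := mul_nonpos_of_nonpos_of_nonneg h1 h2
  have hlt : (0:ℝ) < lam * t := mul_pos hlam0 ht0
  have hA := hanti (Set.mem_Ioi.mpr ht0) (Set.mem_Ioi.mpr hlt)
    (le_mul_of_one_le_left ht0.le hlam)
  dsimp only at hA
  -- hA : G (lam*t) * (lam*t)^(-q) ≤ G t * t^(-q)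
  have htq : (0:ℝ) < t ^ q := Real.rpow_pos_of_pos ht0 q
  have hltq : (0:ℝ) < (lam * t) ^ q := Real.rpow_pos_of_pos hlt q
  rw [Real.rpow_neg hlt.le, Real.rpow_neg ht0.le, ← div_eq_mul_inv, ← div_eq_mul_inv,
    div_le_div_iff₀ hltq htq] at hA
  -- hA : G (lam*t) * t^q ≤ G t * (lam*t)^q
  rw [Real.mul_rpow hlam0.le ht0.le] at hA
  have hGle : G (lam * t) ≤ lam ^ q * G t := by
    apply le_of_mul_le_mul_right _ htq
    calc G (lam * t) * t ^ q ≤ G t * (lam ^ q * t ^ q) := hA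
      _ = lam ^ q * G t * t ^ q := by ring
  have h5 := hupper (lam * t) hlt
  have h6 := hlower t ht0
  have hglt : 0 ≤ g (lam * t) := hgnn _ hlt.le
  have hlq : (0:ℝ) < lam ^ q := Real.rpow_pos_of_pos hlam0 q
  have e1 : lam * t * g (lam * t) ≤ q / p * lam ^ q * g t * t := by
    have h7 : q * G (lam * t) ≤ q * (lam ^ q * G t) :=
      mul_le_mul_of_nonneg_left hGle hq0.le
    have h8 : G t ≤ t * g t / p := by rw [le_div_iff₀ hp0]; linarith [h6]
    have h9 : lam ^ q * G t ≤ lam ^ q * (t * g t / p) :=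
      mul_le_mul_of_nonneg_left h8 hlq.le
    calc lam * t * g (lam * t) ≤ q * G (lam * t) := h5
      _ ≤ q * (lam ^ q * G t) := h7
      _ ≤ q * (lam ^ q * (t * g t / p)) := by nlinarith [h9]
      _ = q / p * lam ^ q * g t * t := by field_simp
  nlinarith [e1, mul_nonneg (sub_nonneg.mpr hlam) (mul_nonneg ht0.le hglt), ht0]

lemma cmpLem (n : ℕ) (s p q : ℝ) (hs0 : 0 < s) (hp : 1 < p) (hpq : p ≤ q)
    (g G : ℝ → ℝ) (hgG : GoodG p q g G)
    {c t A B : ℝ} (hc : 1 ≤ c) (ht : 0 ≤ t) (hA : 0 < A) (hB : 0 < B)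
    (hAB : A ≤ c * B) (hBA : B ≤ c * A) :
    g (t / B ^ s) * B ^ (-(n:ℝ) - s) ≤
      (q / p * (c ^ s) ^ q * c ^ ((n:ℝ) + s)) * (g (t / A ^ s) * A ^ (-(n:ℝ) - s)) := by
  have hgG' := hgG
  obtain ⟨hmono, hcont, hg0, hgnn, -, -, -⟩ := hgG'
  have hp0 : (0:ℝ) < p := lt_trans one_pos hp
  have hq0 : (0:ℝ) < q := lt_of_lt_of_le hp0 hpq
  have hc0 : (0:ℝ) < c := lt_of_lt_of_le one_pos hc
  have hAs : 0 < A ^ s := Real.rpow_pos_of_pos hA s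
  have hBs : 0 < B ^ s := Real.rpow_pos_of_pos hB s
  have hcs : 1 ≤ c ^ s := Real.one_le_rpow hc hs0.le
  have h1 : A ^ s ≤ c ^ s * B ^ s := by
    rw [← Real.mul_rpow hc0.le hB.le]
    exact Real.rpow_le_rpow hA.le hAB hs0.le
  have harg : t / B ^ s ≤ c ^ s * (t / A ^ s) := by
    rw [show c ^ s * (t / A ^ s) = c ^ s * t / A ^ s by ring,
      div_le_div_iff₀ hBs hAs]
    nlinarith [mul_le_mul_of_nonneg_left h1 ht]
  have hg1 : g (t / B ^ s) ≤ g (c ^ s * (t / A ^ s)) := by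
    rcases eq_or_lt_of_le harg with h | h
    · rw [h]
    · exact le_of_lt (hmono (Set.mem_Ici.mpr (div_nonneg ht hBs.le))
        (Set.mem_Ici.mpr (mul_nonneg (by positivity) (div_nonneg ht hAs.le))) h)
  have hg2 : g (c ^ s * (t / A ^ s)) ≤ q / p * (c ^ s) ^ q * g (t / A ^ s) :=
    doubling p q hp hpq g G hgG hcs (div_nonneg ht hAs.le)
  have hpow : B ^ (-(n:ℝ) - s) ≤ c ^ ((n:ℝ) + s) * A ^ (-(n:ℝ) - s) := by
    have h2 : A / c ≤ B := by
      rw [div_le_iff₀ hc0]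
      nlinarith [hAB]
    have h3 : B ^ (-(n:ℝ) - s) ≤ (A / c) ^ (-(n:ℝ) - s) :=
      Real.rpow_le_rpow_of_nonpos (by positivity) h2
        (by have : (0:ℝ) ≤ (n:ℝ) := Nat.cast_nonneg n; linarith)
    rw [Real.div_rpow hA.le hc0.le,
      show -(n:ℝ) - s = -((n:ℝ) + s) by ring, Real.rpow_neg hc0.le,
      div_eq_mul_inv, inv_inv] at h3
    rw [show -(n:ℝ) - s = -((n:ℝ) + s) by ring]
    nlinarith [h3]
  have hCnn : 0 ≤ q / p * (c ^ s) ^ q * g (t / A ^ s) :=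
    mul_nonneg (mul_nonneg (div_nonneg hq0.le hp0.le) (Real.rpow_nonneg (by positivity) q))
      (hgnn _ (div_nonneg ht hAs.le))
  calc g (t / B ^ s) * B ^ (-(n:ℝ) - s)
      ≤ (q / p * (c ^ s) ^ q * g (t / A ^ s)) * (c ^ ((n:ℝ) + s) * A ^ (-(n:ℝ) - s)) :=
        mul_le_mul (hg1.trans hg2) hpow (Real.rpow_nonneg hB.le _) hCnn
    _ = (q / p * (c ^ s) ^ q * c ^ ((n:ℝ) + s)) * (g (t / A ^ s) * A ^ (-(n:ℝ) - s)) := by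
        ring

lemma meas_aux {n : ℕ} {g : ℝ → ℝ} (hcont : ContinuousOn g (Set.Ici 0))
    {u : Rn n → ℝ} (hu : Measurable u) {A : Rn n → ℝ} (hA : Continuous A)
    (hA0 : ∀ x, 0 ≤ A x) (s e : ℝ) (hs : 0 ≤ s) (he : e ≤ 0) :
    Measurable fun x => g (|u x| / A x ^ s) * A x ^ e := by
  have hg' : Continuous fun t : ℝ => g (max t 0) := by
    rw [← continuousOn_univ]
    exact hcont.comp ((continuous_id.max continuous_const).continuousOn)
      fun x _ => Set.mem_Ici.mpr (le_max_right _ _)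
  have hAs : Measurable fun x => A x ^ s :=
    ((Real.continuous_rpow_const hs).comp hA).measurable
  have h1 : Measurable fun x => g (|u x| / A x ^ s) := by
    have heq : (fun x => g (|u x| / A x ^ s)) =
        fun x => g (max (|u x| / A x ^ s) 0) := by
      funext x
      rw [max_eq_left (div_nonneg (abs_nonneg _) (Real.rpow_nonneg (hA0 x) s))]
    rw [heq]
    exact hg'.measurable.comp (hu.abs.div hAs)
  have h2 : Measurable fun x => A x ^ e := by
    have heq : (fun x => A x ^ e) = fun x => (A x ^ (-e))⁻¹ := by
      funext x
      rw [← Real.rpow_neg (hA0 x), neg_neg]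
    rw [heq]
    exact (((Real.continuous_rpow_const (by linarith)).comp hA).measurable).inv
  exact h1.mul h2

lemma transfer {n : ℕ} {S : Set (Rn n)} (hS : MeasurableSet S) {f₁ f₂ : Rn n → ℝ}
    (h₂ : IntegrableOn f₂ S) (hm : Measurable f₁) {C : ℝ}
    (hb : ∀ x ∈ S, 0 ≤ f₁ x ∧ f₁ x ≤ C * f₂ x) : IntegrableOn f₁ S := by
  refine (h₂.const_mul C).mono' hm.aestronglyMeasurable ?_
  filter_upwards [ae_restrict_mem hS] with x hx
  rw [Real.norm_eq_abs, abs_of_nonneg (hb x hx).1]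
  exact (hb x hx).2

lemma memLgs_iff (n : ℕ) (hn : 2 ≤ n) (s p q : ℝ)
    (hs0 : 0 < s) (hs1 : s < 1) (hp : 1 < p) (hpq : p ≤ q)
    (g G : ℝ → ℝ) (hgG : GoodG p q g G)
    (u : Rn n → ℝ) (hu_meas : Measurable u) :
    MemLgs g s u ↔
      ∀ (x₀ : Rn n) (R : ℝ), 0 < R →
        IntegrableOn
          (fun x => g (|u x| / ‖x - x₀‖ ^ s) * ‖x - x₀‖ ^ (-(n : ℝ) - s))
          ((ball x₀ R)ᶜ) := by
  have hcontg : ContinuousOn g (Set.Ici 0) := hgG.2.1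
  have hgnn : ∀ t : ℝ, 0 ≤ t → 0 ≤ g t := hgG.2.2.2.1
  have hens : -(n:ℝ) - s ≤ 0 := by
    have : (0:ℝ) ≤ (n:ℝ) := Nat.cast_nonneg n
    linarith
  have hone : Continuous fun x : Rn n => 1 + ‖x‖ :=
    continuous_const.add continuous_norm
  have honep : ∀ x : Rn n, (0:ℝ) < 1 + ‖x‖ := fun x => by positivity
  constructor
  · rintro ⟨-, hInt⟩ x₀ R hR
    set c : ℝ := max (1 + (1 + ‖x₀‖) / R) (1 + ‖x₀‖) with hc_def
    have hc : (1:ℝ) ≤ c := by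
      have : (1:ℝ) ≤ 1 + (1 + ‖x₀‖) / R := by
        have h0 : (0:ℝ) ≤ (1 + ‖x₀‖) / R := by positivity
        linarith
      exact this.trans (le_max_left _ _)
    refine transfer (C := q / p * (c ^ s) ^ q * c ^ ((n:ℝ) + s))
      (measurableSet_ball.compl) hInt.integrableOn
      (meas_aux hcontg hu_meas ((continuous_id.sub continuous_const).norm)
        (fun x => norm_nonneg _) s (-(n:ℝ) - s) hs0.le hens) ?_
    intro x hx
    have hxd : R ≤ ‖x - x₀‖ := by
      rw [Set.mem_compl_iff, mem_ball, dist_eq_norm] at hx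
      linarith [not_lt.mp hx]
    have hB : (0:ℝ) < ‖x - x₀‖ := lt_of_lt_of_le hR hxd
    have hAB : 1 + ‖x‖ ≤ c * ‖x - x₀‖ := by
      have h1 : 1 + ‖x₀‖ ≤ (1 + ‖x₀‖) / R * ‖x - x₀‖ := by
        have h2 : (1 + ‖x₀‖) / R * R ≤ (1 + ‖x₀‖) / R * ‖x - x₀‖ :=
          mul_le_mul_of_nonneg_left hxd (by positivity)
        rw [div_mul_cancel₀ _ (ne_of_gt hR)] at h2
        exact h2
      have h3 : ‖x‖ ≤ ‖x - x₀‖ + ‖x₀‖ := by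
        calc ‖x‖ = ‖x - x₀ + x₀‖ := by rw [sub_add_cancel]
          _ ≤ ‖x - x₀‖ + ‖x₀‖ := norm_add_le _ _
      have h4 : (1 + (1 + ‖x₀‖) / R) * ‖x - x₀‖ ≤ c * ‖x - x₀‖ :=
        mul_le_mul_of_nonneg_right (le_max_left _ _) hB.le
      nlinarith [h1, h3, h4]
    have hBA : ‖x - x₀‖ ≤ c * (1 + ‖x‖) := by
      have h3 : ‖x - x₀‖ ≤ ‖x‖ + ‖x₀‖ := norm_sub_le _ _
      have h4 : (1 + ‖x₀‖) * (1 + ‖x‖) ≤ c * (1 + ‖x‖) :=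
        mul_le_mul_of_nonneg_right (le_max_right _ _) (honep x).le
      nlinarith [norm_nonneg x, norm_nonneg x₀]
    constructor
    · exact mul_nonneg (hgnn _ (div_nonneg (abs_nonneg _) (Real.rpow_nonneg hB.le s)))
        (Real.rpow_nonneg hB.le _)
    · exact cmpLem n s p q hs0 hp hpq g G hgG hc (abs_nonneg _) (honep x) hB hAB hBA
  · intro h
    refine ⟨hu_meas, ?_⟩
    rw [← integrableOn_univ]
    have hmeasf : Measurable fun x : Rn n =>
        g (|u x| / (1 + ‖x‖) ^ s) * (1 + ‖x‖) ^ (-(n:ℝ) - s) :=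
      meas_aux hcontg hu_meas hone (fun x => (honep x).le) s (-(n:ℝ) - s) hs0.le hens
    -- the point x₀ with ‖x₀‖ = 3
    have hn0 : 0 < n := by omega
    set x₀ : Rn n := EuclideanSpace.single (⟨0, hn0⟩ : Fin n) (3:ℝ) with hx₀def
    have hx₀ : ‖x₀‖ = 3 := by
      rw [hx₀def, EuclideanSpace.norm_single]
      norm_num
    -- piece 1 : far away
    have piece1 : IntegrableOn
        (fun x : Rn n => g (|u x| / (1 + ‖x‖) ^ s) * (1 + ‖x‖) ^ (-(n:ℝ) - s))
        ((ball (0 : Rn n) 1)ᶜ) := by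
      refine transfer (C := q / p * ((2:ℝ) ^ s) ^ q * (2:ℝ) ^ ((n:ℝ) + s))
        (measurableSet_ball.compl) (h 0 1 one_pos) hmeasf ?_
      intro x hx
      have hx1 : (1:ℝ) ≤ ‖x‖ := by
        rw [Set.mem_compl_iff, mem_ball, dist_zero_right] at hx
        linarith [not_lt.mp hx]
      have hApos : (0:ℝ) < ‖x - (0:Rn n)‖ := by rw [sub_zero]; linarith
      have hAB : 1 + ‖x‖ ≤ 2 * ‖x - (0:Rn n)‖ := by rw [sub_zero]; linarith
      have hBA : ‖x - (0:Rn n)‖ ≤ 2 * (1 + ‖x‖) := by rw [sub_zero]; linarith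
      constructor
      · exact mul_nonneg (hgnn _ (div_nonneg (abs_nonneg _)
          (Real.rpow_nonneg (honep x).le s))) (Real.rpow_nonneg (honep x).le _)
      · exact cmpLem n s p q hs0 hp hpq g G hgG (by norm_num : (1:ℝ) ≤ 2)
          (abs_nonneg _) hApos (honep x) hBA hAB
    -- piece 2 : near the origin
    have hsub : ball (0 : Rn n) 2 ⊆ (ball x₀ 1)ᶜ := by
      intro x hx
      rw [mem_ball, dist_zero_right] at hx
      rw [Set.mem_compl_iff, mem_ball, dist_eq_norm]
      push_neg
      have h1 : ‖x₀‖ - ‖x‖ ≤ ‖x₀ - x‖ := norm_sub_norm_le _ _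
      rw [norm_sub_rev] at h1
      linarith [hx₀ ▸ h1]
    have piece2 : IntegrableOn
        (fun x : Rn n => g (|u x| / (1 + ‖x‖) ^ s) * (1 + ‖x‖) ^ (-(n:ℝ) - s))
        (ball (0 : Rn n) 2) := by
      refine transfer (C := q / p * ((5:ℝ) ^ s) ^ q * (5:ℝ) ^ ((n:ℝ) + s))
        measurableSet_ball ((h x₀ 1 one_pos).mono_set hsub) hmeasf ?_
      intro x hx
      rw [mem_ball, dist_zero_right] at hx
      have h1 : ‖x₀‖ - ‖x‖ ≤ ‖x₀ - x‖ := norm_sub_norm_le _ _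
      rw [norm_sub_rev] at h1
      have hA1 : (1:ℝ) ≤ ‖x - x₀‖ := by linarith [hx₀ ▸ h1]
      have hA5 : ‖x - x₀‖ ≤ 5 := by
        have := norm_sub_le x x₀
        rw [hx₀] at this
        linarith
      have hApos : (0:ℝ) < ‖x - x₀‖ := by linarith
      have hAB : 1 + ‖x‖ ≤ 5 * ‖x - x₀‖ := by nlinarith
      have hBA : ‖x - x₀‖ ≤ 5 * (1 + ‖x‖) := by nlinarith [norm_nonneg x]
      constructor
      · exact mul_nonneg (hgnn _ (div_nonneg (abs_nonneg _)
          (Real.rpow_nonneg (honep x).le s))) (Real.rpow_nonneg (honep x).le _)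
      · exact cmpLem n s p q hs0 hp hpq g G hgG (by norm_num : (1:ℝ) ≤ 5)
          (abs_nonneg _) hApos (honep x) hBA hAB
    refine (piece2.union piece1).mono_set ?_
    intro x _
    rcases lt_or_ge ‖x‖ 2 with hx | hx
    · exact Set.mem_union_left _ (by rw [mem_ball, dist_zero_right]; exact hx)
    · exact Set.mem_union_right _ (by
        rw [Set.mem_compl_iff, mem_ball, dist_zero_right]
        push_neg
        linarith)

/-- characterization of the tail space: a measurable `u`
belongs to `L^g_s(ℝⁿ)` if and only if `Tail(u;x₀,R) < ∞` for every `x₀` and `R > 0`,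
finiteness being expressed as integrability of the tail integrand. -/
theorem statement11 (n : ℕ) (hn : 2 ≤ n) (s p q : ℝ)
    (hs0 : 0 < s) (hs1 : s < 1) (hp : 1 < p) (hpq : p ≤ q)
    (g G : ℝ → ℝ) (hgG : GoodG p q g G)
    (u : Rn n → ℝ) (hu_meas : Measurable u) :
    MemLgs g s u ↔
      ∀ (x₀ : Rn n) (R : ℝ), 0 < R →
        IntegrableOn
          (fun x => g (|u x| / ‖x - x₀‖ ^ s) * ‖x - x₀‖ ^ (-(n : ℝ) - s))
          ((ball x₀ R)ᶜ) := by
  exact memLgs_iff n hn s p q hs0 hs1 hp hpq g G hgG u hu_meas
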